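/- Let G be a finite-dimensional real inner product space, let C₁, …, C_m be nonempty closed convex subsets of G whose Minkowski sum S = {x₁ + ⋯ + x_m : x₁ ∈ C₁, …, x_m ∈ C_m} is closed, and let y ∈ G. Fix points x_{1,0}, …, x_{m,0} ∈ G, 0 < ε < 1/m, and a sequence (γₙ) in [ε, 2/m − ε], and iterate: pₙ = ∑_{i=1}^m x_{i,n}; zₙ = γₙ(pₙ − y); x_{i,n+1} = proj_{C_i}(x_{i,n} − zₙ) for i = 1,…,m. Then pₙ converges to proj_S y, the projection of y onto S. -/

import Mathlib

open Filter Topology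

noncomputable section

open RealInnerProductSpace in
private lemma aux_vi' {G : Type*} [NormedAddCommGroup G] [InnerProductSpace ℝ G]
    {K : Set G} (hK : Convex ℝ K) {z q : G} (hq : q ∈ K)
    (hmin : ∀ w ∈ K, ‖z - q‖ ≤ ‖z - w‖) {w : G} (hw : w ∈ K) :
    ⟪z - q, w - q⟫ ≤ 0 := by
  haveI : Nonempty K := ⟨⟨q, hq⟩⟩
  have h : ‖z - q‖ = ⨅ w : K, ‖z - w‖ := by
    refine le_antisymm (le_ciInf fun w => hmin w w.2) ?_
    refine ciInf_le (f := fun w : K => ‖z - w‖) ?_ ⟨q, hq⟩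
    exact ⟨0, by rintro r ⟨w, rfl⟩; exact norm_nonneg _⟩
  exact (norm_eq_iInf_iff_real_inner_le_zero hK hq).1 h w hw

open RealInnerProductSpace in
private lemma key_id' {G : Type*} [NormedAddCommGroup G] [InnerProductSpace ℝ G] (a b c : G) :
    ‖b - c‖^2 = ‖a - c‖^2 - ‖a - b‖^2 + 2 * ⟪a - b, c - b⟫ := by
  simp only [← real_inner_self_eq_norm_sq, inner_sub_left, inner_sub_right]
  linarith [real_inner_comm a b, real_inner_comm a c, real_inner_comm b c]

private lemma sq_sum_le' {G : Type*} [NormedAddCommGroup G] {m : ℕ} (d : Fin m → G) :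
    ‖∑ i, d i‖^2 ≤ (m:ℝ) * ∑ i, ‖d i‖^2 := by
  have h1 : ‖∑ i, d i‖ ≤ ∑ i, ‖d i‖ := norm_sum_le _ _
  have h2 : (∑ i, ‖d i‖)^2 ≤ (m:ℝ) * ∑ i, ‖d i‖^2 := by
    simpa using sq_sum_le_card_mul_sum_sq (s := (Finset.univ : Finset (Fin m))) (f := fun i => ‖d i‖)
  calc ‖∑ i, d i‖^2 ≤ (∑ i, ‖d i‖)^2 := by
        apply pow_le_pow_left₀ (norm_nonneg _) h1
    _ ≤ _ := h2

open RealInnerProductSpace in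
private lemma extract' {G : Type*} [NormedAddCommGroup G] [InnerProductSpace ℝ G]
    {m : ℕ} (u u' w : Fin m → G) (P : G) (γ : ℝ) :
    ∑ i, ⟪(u i - γ • P) - u' i, w i - u' i⟫
      = (∑ i, ⟪u i - u' i, w i - u' i⟫) - γ * ⟪P, (∑ i, w i) - (∑ i, u' i)⟫ := by
  have h : ∀ i : Fin m, (u i - γ • P) - u' i = (u i - u' i) - γ • P := fun i => sub_right_comm _ _ _
  simp only [h, inner_sub_left, real_inner_smul_left, inner_sum, Finset.sum_sub_distrib,
    Finset.mul_sum]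
  rw [← Finset.mul_sum, ← inner_sum, Finset.sum_sub_distrib]

open RealInnerProductSpace in
private lemma step_descent' {G : Type*} [NormedAddCommGroup G] [InnerProductSpace ℝ G]
    {m : ℕ} (hm : 0 < m) (u u' : Fin m → G) (y : G) {γ ε : ℝ}
    (hε : 0 < ε) (hγ1 : ε ≤ γ) (hγ2 : γ ≤ 2/(m:ℝ) - ε)
    (hA : ∑ i, ⟪(u i - γ • ((∑ j, u j) - y)) - u' i, u i - u' i⟫ ≤ 0) :
    ‖(∑ i, u' i) - y‖^2 ≤ ‖(∑ i, u i) - y‖^2 ∧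
    ∑ i, ‖u i - u' i‖^2 ≤ (2/((m:ℝ)^2*ε)) * (‖(∑ i, u i) - y‖^2 - ‖(∑ i, u' i) - y‖^2) := by
  have hmR : (0:ℝ) < m := by exact_mod_cast hm
  have hγpos : 0 < γ := lt_of_lt_of_le hε hγ1
  set P := (∑ i, u i) - y with hP
  set s := ∑ i, (u i - u' i) with hs
  set D2 := ∑ i, ‖u i - u' i‖^2 with hD2
  have hD2nn : 0 ≤ D2 := Finset.sum_nonneg fun i _ => sq_nonneg _
  have hA' : D2 ≤ γ * ⟪P, s⟫ := by
    have h := extract' u u' u P γ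
    simp only [real_inner_self_eq_norm_sq] at h
    rw [h, ← Finset.sum_sub_distrib, ← hs] at hA; linarith
  have hP' : (∑ i, u' i) - y = P - s := by
    rw [hs, hP, Finset.sum_sub_distrib]; abel
  have I1 : ‖P - s‖^2 = ‖P‖^2 - 2*⟪P,s⟫ + ‖s‖^2 := norm_sub_sq_real P s
  have I3 : ‖s‖^2 ≤ (m:ℝ) * D2 := sq_sum_le' _
  set e := ‖P‖^2 with he
  set e' := ‖P - s‖^2 with he'
  have hγm : γ * m ≤ 2 - m*ε := by
    have h := mul_le_mul_of_nonneg_right hγ2 hmR.le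
    rw [sub_mul, div_mul_cancel₀] at h
    · linarith
    · exact ne_of_gt hmR
  have key : (m*ε) * D2 ≤ γ * (e - e') := by
    have I1γ : γ * e' = γ*e - 2*(γ*⟪P,s⟫) + γ*‖s‖^2 := by rw [I1]; ring
    have p2a : γ*‖s‖^2 ≤ γ*((m:ℝ)*D2) := mul_le_mul_of_nonneg_left I3 hγpos.le
    have p2b : γ*((m:ℝ)*D2) ≤ (2 - m*ε)*D2 := by
      calc γ*((m:ℝ)*D2) = (γ*m)*D2 := by ring
        _ ≤ (2 - m*ε)*D2 := mul_le_mul_of_nonneg_right hγm hD2nn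
    nlinarith [hA']
  have he'le : e' ≤ e := by
    by_contra h
    push_neg at h
    nlinarith [mul_pos hγpos (sub_pos.2 h), mul_nonneg (mul_nonneg hmR.le hε.le) hD2nn]
  rw [hP']
  refine ⟨he'le, ?_⟩
  have hγ2' : γ ≤ 2/(m:ℝ) := by linarith
  have key2 : (m*ε) * D2 ≤ (2/(m:ℝ)) * (e - e') :=
    le_trans key (mul_le_mul_of_nonneg_right hγ2' (by linarith))
  rw [div_mul_eq_mul_div, le_div_iff₀ (by positivity)]
  have hfs : (m:ℝ) * ((2/m)*(e-e')) = 2*(e-e') := by field_simp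
  nlinarith [mul_le_mul_of_nonneg_left key2 hmR.le]

open RealInnerProductSpace in
private lemma step_main' {G : Type*} [NormedAddCommGroup G] [InnerProductSpace ℝ G]
    {m : ℕ} (hm : 0 < m) (u u' v : Fin m → G) (y q : G) {γ ε : ℝ}
    (hε : 0 < ε) (hγ1 : ε ≤ γ) (hγ2 : γ ≤ 2/(m:ℝ) - ε)
    (hq : q = ∑ i, v i)
    (hQ : ‖q - y‖^2 ≤ ‖(∑ i, u' i) - y‖^2)
    (hB : ∑ i, ⟪(u i - γ • ((∑ j, u j) - y)) - u' i, v i - u' i⟫ ≤ 0) :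
    ∑ i, ‖u' i - v i‖^2 ≤ (∑ i, ‖u i - v i‖^2) + (∑ i, ‖u i - u' i‖^2)
      + ε * (‖q - y‖^2 - ‖(∑ i, u' i) - y‖^2) := by
  have hmR : (0:ℝ) < m := by exact_mod_cast hm
  have hγpos : 0 < γ := lt_of_lt_of_le hε hγ1
  set P := (∑ i, u i) - y with hP
  set s := ∑ i, (u i - u' i) with hs
  set D2 := ∑ i, ‖u i - u' i‖^2 with hD2
  have hD2nn : 0 ≤ D2 := Finset.sum_nonneg fun i _ => sq_nonneg _
  have hP' : (∑ i, u' i) - y = P - s := by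
    rw [hs, hP, Finset.sum_sub_distrib]; abel
  set b := ∑ i, ⟪u i - u' i, v i - u' i⟫ with hb
  set a := ⟪P, s⟫ with ha
  set c := ⟪P, q - y⟫ with hc
  set Q := ‖q - y‖^2 with hQdef
  set e := ‖P‖^2 with he
  set e' := ‖P - s‖^2 with he'
  have hB'' : b ≤ γ * (c - e + a) := by
    have h := extract' u u' v P γ
    rw [h] at hB
    have hsum : (∑ i, v i) - (∑ i, u' i) = (q - y) - (P - s) := by
      rw [← hq, ← hP']; abel
    rw [hsum] at hB
    have hinner : ⟪P, (q - y) - (P - s)⟫ = c - (e - a) := by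
      simp only [inner_sub_right, real_inner_self_eq_norm_sq] at hc ⊢
      linarith [hc, ha, he]
    rw [hinner] at hB
    linarith
  have I1 : e' = e - 2*a + ‖s‖^2 := by rw [he', norm_sub_sq_real P s, he, ha]
  have I2 : ∑ i, ‖u' i - v i‖^2 = (∑ i, ‖u i - v i‖^2) - D2 + 2*b := by
    rw [Finset.sum_congr rfl (fun i _ => key_id' (u i) (u' i) (v i)),
      Finset.sum_add_distrib, Finset.sum_sub_distrib, ← Finset.mul_sum, ← hb, ← hD2]
  have I3 : ‖s‖^2 ≤ (m:ℝ) * D2 := sq_sum_le' _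
  have I4 : 2*c ≤ e + Q := by
    have h1 : c ≤ ‖P‖ * ‖q - y‖ := real_inner_le_norm P (q - y)
    nlinarith [sq_nonneg (‖P‖ - ‖q - y‖)]
  rw [hP'] at hQ ⊢
  rw [← he'] at hQ ⊢
  have hγm : γ * m ≤ 2 - m*ε := by
    have h := mul_le_mul_of_nonneg_right hγ2 hmR.le
    rw [sub_mul, div_mul_cancel₀] at h
    · linarith
    · exact ne_of_gt hmR
  have p1 : γ*(2*c) ≤ γ*(e+Q) := mul_le_mul_of_nonneg_left I4 hγpos.le
  have p2 : γ*‖s‖^2 ≤ (2 - m*ε)*D2 := by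
    calc γ*‖s‖^2 ≤ γ*((m:ℝ)*D2) := mul_le_mul_of_nonneg_left I3 hγpos.le
      _ = (γ*m)*D2 := by ring
      _ ≤ (2 - m*ε)*D2 := mul_le_mul_of_nonneg_right hγm hD2nn
  have p3 : γ*(Q - e') ≤ ε*(Q - e') := mul_le_mul_of_nonpos_right hγ1 (by linarith)
  have h2a : 2*a = e - e' + ‖s‖^2 := by linarith [I1]
  have p4 : γ*(2*a) = γ*(e - e' + ‖s‖^2) := by rw [h2a]
  have p5 : 0 ≤ (m:ℝ)*ε*D2 := by positivity
  rw [I2]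
  linarith
/-- Projection onto a closed Minkowski sum `S = C₁ + ⋯ + C_m` of closed convex sets by
a parallel projected gradient scheme: the sums `pₙ = ∑ᵢ x_{i,n}` converge to `proj_S y`. -/
theorem projection_onto_minkowski_sum
    {G : Type*} [NormedAddCommGroup G] [InnerProductSpace ℝ G] [FiniteDimensional ℝ G]
    {m : ℕ}
    (C : Fin m → Set G)
    (hC_ne : ∀ i, (C i).Nonempty) (hC_closed : ∀ i, IsClosed (C i))
    (hC_convex : ∀ i, Convex ℝ (C i))
    (S : Set G)
    (hS : S = {w : G | ∃ v : Fin m → G, (∀ i, v i ∈ C i) ∧ w = ∑ i, v i})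
    (hS_closed : IsClosed S)
    (y : G)
    (proj : Fin m → G → G)
    (hproj : ∀ i, ∀ z : G, proj i z ∈ C i ∧ ∀ w ∈ C i, ‖z - proj i z‖ ≤ ‖z - w‖)
    (ε : ℝ) (hε : 0 < ε) (hεm : ε < 1/(m : ℝ))
    (γ : ℕ → ℝ) (hγ : ∀ n, γ n ∈ Set.Icc ε (2/(m : ℝ) - ε))
    (x : ℕ → Fin m → G)
    (hiter : ∀ n, ∀ i, x (n+1) i = proj i (x n i - γ n • ((∑ j, x n j) - y))) :
    ∃ q : G, q ∈ S ∧ (∀ w ∈ S, ‖y - q‖ ≤ ‖y - w‖) ∧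
      Tendsto (fun n => ∑ i, x n i) atTop (𝓝 q) := by
  classical
  -- m is positive
  have hm : 0 < m := by
    rcases Nat.eq_zero_or_pos m with h | h
    · subst h; norm_num at hεm; linarith
    · exact h
  have hmR : (0:ℝ) < m := by exact_mod_cast hm
  -- S is convex and nonempty
  have hSconv : Convex ℝ S := by
    rw [hS]
    rintro w ⟨v1, hv1, rfl⟩ w' ⟨v2, hv2, rfl⟩ t1 t2 ht1 ht2 hts
    refine ⟨fun i => t1 • v1 i + t2 • v2 i, fun i => hC_convex i (hv1 i) (hv2 i) ht1 ht2 hts, ?_⟩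
    rw [Finset.sum_add_distrib, ← Finset.smul_sum, ← Finset.smul_sum]
  have hSne : S.Nonempty := by
    refine ⟨∑ i, (hC_ne i).some, ?_⟩
    rw [hS]
    exact ⟨fun i => (hC_ne i).some, fun i => (hC_ne i).some_mem, rfl⟩
  -- the projection q of y onto S
  obtain ⟨q, hqS, hqdist⟩ := hS_closed.exists_infDist_eq_dist hSne y
  have hqmin : ∀ w ∈ S, ‖y - q‖ ≤ ‖y - w‖ := by
    intro w hw
    rw [← dist_eq_norm, ← dist_eq_norm, ← hqdist]
    exact Metric.infDist_le_dist_of_mem hw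
  refine ⟨q, hqS, hqmin, ?_⟩
  -- decomposition of q
  have hqS' := hqS
  rw [hS] at hqS'
  obtain ⟨v, hvC, hvq⟩ := hqS'
  -- strong projection inequality at q
  have hstrong : ∀ w ∈ S, ‖w - q‖^2 ≤ ‖w - y‖^2 - ‖q - y‖^2 := by
    intro w hw
    have h := aux_vi' hSconv hqS hqmin hw
    have hid := key_id' y q w
    rw [norm_sub_rev q w, norm_sub_rev y w, norm_sub_rev y q] at hid
    linarith
  -- iterates are in the sets
  have hmem : ∀ n i, x (n+1) i ∈ C i := by
    intro n i; rw [hiter]; exact (hproj i _).1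
  have pS : ∀ n, (∑ i, x (n+1) i) ∈ S := by
    intro n; rw [hS]; exact ⟨x (n+1), fun i => hmem n i, rfl⟩
  have hQle : ∀ n, ‖q - y‖^2 ≤ ‖(∑ i, x (n+1) i) - y‖^2 := by
    intro n
    have h := hqmin _ (pS n)
    rw [norm_sub_rev y q, norm_sub_rev y _] at h
    exact pow_le_pow_left₀ (norm_nonneg _) h 2
  -- variational inequalities
  have hVI : ∀ n (w : Fin m → G), (∀ i, w i ∈ C i) →
      ∑ i, (inner ℝ ((x n i - γ n • ((∑ j, x n j) - y)) - x (n+1) i) (w i - x (n+1) i) : ℝ) ≤ 0 := by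
    intro n w hw
    apply Finset.sum_nonpos
    intro i _
    rw [hiter n i]
    exact aux_vi' (hC_convex i) (hproj i _).1 (fun w' hw' => (hproj i _).2 w' hw') (hw i)
  -- descent step (n ≥ 1)
  have hdesc : ∀ n, 1 ≤ n →
      ‖(∑ i, x (n+1) i) - y‖^2 ≤ ‖(∑ i, x n i) - y‖^2 ∧
      ∑ i, ‖x n i - x (n+1) i‖^2 ≤
        (2/((m:ℝ)^2*ε)) * (‖(∑ i, x n i) - y‖^2 - ‖(∑ i, x (n+1) i) - y‖^2) := by
    intro n hn
    obtain ⟨k, rfl⟩ := Nat.exists_eq_add_of_le hn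
    exact step_descent' hm (x (1+k)) (x (1+k+1)) y hε (hγ (1+k)).1 (hγ (1+k)).2
      (hVI (1+k) (x (1+k)) (fun i => by rw [Nat.add_comm 1 k]; exact hmem k i))
  -- main (Fejér-type) step
  have hmain : ∀ n,
      ∑ i, ‖x (n+1) i - v i‖^2 ≤ (∑ i, ‖x n i - v i‖^2) + (∑ i, ‖x n i - x (n+1) i‖^2)
        + ε * (‖q - y‖^2 - ‖(∑ i, x (n+1) i) - y‖^2) := by
    intro n
    exact step_main' hm (x n) (x (n+1)) v y q hε (hγ n).1 (hγ n).2 hvq (hQle n)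
      (hVI n v hvC)
  -- telescoping sum of the squared displacements
  have hsumD : ∀ N : ℕ, (∑ k ∈ Finset.range N, ∑ i, ‖x (k+1) i - x (k+2) i‖^2)
      ≤ (2/((m:ℝ)^2*ε)) * (‖(∑ i, x 1 i) - y‖^2 - ‖(∑ i, x (N+1) i) - y‖^2) := by
    intro N
    induction N with
    | zero => simp
    | succ N ih =>
      rw [Finset.sum_range_succ]
      have h := (hdesc (N+1) (by omega)).2
      simp only [show N+1+1 = N+2 from rfl] at h
      linarith
  -- Fejér telescoping
  have hsumV : ∀ N : ℕ, ∑ i, ‖x (N+1) i - v i‖^2 ≤ (∑ i, ‖x 1 i - v i‖^2)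
      + (∑ k ∈ Finset.range N, ∑ i, ‖x (k+1) i - x (k+2) i‖^2)
      + ε * (∑ k ∈ Finset.range N, (‖q - y‖^2 - ‖(∑ i, x (k+2) i) - y‖^2)) := by
    intro N
    induction N with
    | zero => simp
    | succ N ih =>
      rw [Finset.sum_range_succ, Finset.sum_range_succ]
      have h := hmain (N+1)
      simp only [show N+1+1 = N+2 from rfl] at h
      have hmul : ε * ((∑ k ∈ Finset.range N, (‖q - y‖^2 - ‖(∑ i, x (k+2) i) - y‖^2))
          + (‖q - y‖^2 - ‖(∑ i, x (N+2) i) - y‖^2))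
          = ε * (∑ k ∈ Finset.range N, (‖q - y‖^2 - ‖(∑ i, x (k+2) i) - y‖^2))
          + ε * (‖q - y‖^2 - ‖(∑ i, x (N+2) i) - y‖^2) := by ring
      rw [hmul]
      linarith
  -- F is antitone from index 1 on
  have hFanti : ∀ a k, 1 ≤ a → ‖(∑ i, x (a+k) i) - y‖^2 ≤ ‖(∑ i, x a i) - y‖^2 := by
    intro a k ha
    induction k with
    | zero => simp
    | succ k ih =>
      have h := (hdesc (a+k) (by omega)).1
      simp only [show a+k+1 = a+(k+1) from rfl] at h
      linarith
  set B := (∑ i, ‖x 1 i - v i‖^2)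
      + (2/((m:ℝ)^2*ε)) * (‖(∑ i, x 1 i) - y‖^2 - ‖q - y‖^2) with hB
  have hbound : ∀ N : ℕ, 1 ≤ N →
      ‖(∑ i, x (N+1) i) - y‖^2 - ‖q - y‖^2 ≤ B / (ε * N) := by
    intro N hN
    have hterm : ∀ k ∈ Finset.range N, ‖(∑ i, x (N+1) i) - y‖^2 - ‖q - y‖^2
        ≤ ‖(∑ i, x (k+2) i) - y‖^2 - ‖q - y‖^2 := by
      intro k hk
      have hkN := Finset.mem_range.1 hk
      have he : N+1 = (k+2) + (N - k - 1) := by omega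
      rw [he]
      linarith [hFanti (k+2) (N-k-1) (by omega)]
    have hlow : (N:ℝ) * (‖(∑ i, x (N+1) i) - y‖^2 - ‖q - y‖^2)
        ≤ ∑ k ∈ Finset.range N, (‖(∑ i, x (k+2) i) - y‖^2 - ‖q - y‖^2) := by
      have h := Finset.card_nsmul_le_sum (Finset.range N) _ _ hterm
      simpa [nsmul_eq_mul] using h
    have hVnn : (0:ℝ) ≤ ∑ i, ‖x (N+1) i - v i‖^2 := Finset.sum_nonneg fun i _ => sq_nonneg _
    have h1 := hsumV N
    have h2 := hsumD N
    have hFN : ‖q - y‖^2 ≤ ‖(∑ i, x (N+1) i) - y‖^2 := hQle N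
    have hflip : (∑ k ∈ Finset.range N, (‖q - y‖^2 - ‖(∑ i, x (k+2) i) - y‖^2))
        = -(∑ k ∈ Finset.range N, (‖(∑ i, x (k+2) i) - y‖^2 - ‖q - y‖^2)) := by
      rw [← Finset.sum_neg_distrib]
      exact Finset.sum_congr rfl fun k _ => by ring
    rw [le_div_iff₀ (by positivity : (0:ℝ) < ε * N)]
    have hc : (0:ℝ) ≤ 2/((m:ℝ)^2*ε) := by positivity
    have h3 : (2/((m:ℝ)^2*ε)) * (‖(∑ i, x 1 i) - y‖^2 - ‖(∑ i, x (N+1) i) - y‖^2)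
        ≤ (2/((m:ℝ)^2*ε)) * (‖(∑ i, x 1 i) - y‖^2 - ‖q - y‖^2) :=
      mul_le_mul_of_nonneg_left (by linarith) hc
    have h4 : ε * ((N:ℝ) * (‖(∑ i, x (N+1) i) - y‖^2 - ‖q - y‖^2))
        ≤ ε * (∑ k ∈ Finset.range N, (‖(∑ i, x (k+2) i) - y‖^2 - ‖q - y‖^2)) :=
      mul_le_mul_of_nonneg_left hlow hε.le
    rw [hflip] at h1
    rw [hB]
    nlinarith [h1, h2, h3, h4, hVnn]
  -- pass to the limit
  have hT2 : Tendsto (fun N : ℕ => B / (ε * N)) atTop (𝓝 0) := by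
    have h : (fun N : ℕ => B / (ε * N)) = fun N : ℕ => (B/ε) * (1/(N:ℝ)) := by
      funext N; rw [mul_one_div, div_div]
    rw [h]
    simpa using tendsto_one_div_atTop_nhds_zero_nat.const_mul (B/ε)
  have hsq0 : Tendsto (fun N : ℕ => ‖(∑ i, x (N+1) i) - q‖^2) atTop (𝓝 0) := by
    apply tendsto_of_tendsto_of_tendsto_of_le_of_le' tendsto_const_nhds hT2
    · exact Eventually.of_forall (fun N => sq_nonneg _)
    · filter_upwards [eventually_ge_atTop 1] with N hN
      have h1 := hstrong _ (pS N)
      have h2 := hbound N hN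
      linarith
  have hn0 : Tendsto (fun N : ℕ => ‖(∑ i, x (N+1) i) - q‖) atTop (𝓝 0) := by
    have h := hsq0.sqrt
    rw [Real.sqrt_zero] at h
    exact h.congr fun N => Real.sqrt_sq (norm_nonneg _)
  have hfinal : Tendsto (fun N : ℕ => ∑ i, x (N+1) i) atTop (𝓝 q) :=
    tendsto_iff_norm_sub_tendsto_zero.mpr hn0
  exact (tendsto_add_atTop_iff_nat (f := fun n => ∑ i, x n i) (l := 𝓝 q) 1).1 hfinal
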